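/- Let G be a topological group whose topology is the weak topology determined by an increasing filtration K_1 ⊆ K_2 ⊆ ⋯ by compact subsets with ⋃ K_k = G. Let H be a closed normal subgroup of G with quotient map q : G → G/H, and let M_k = q(K_k) with the quotient topology from q restricted to K_k. Then for each k the inclusion M_k → M_{k+1} is a topological embedding, and the weak topology on G/H determined by the filtration M_1 ⊆ M_2 ⊆ ⋯ coincides with the quotient topology on G/H. -/

import Mathlib

open TopologicalSpace

private lemma coinduced_aux {X Y : Type*} [tX : TopologicalSpace X] [tY : TopologicalSpace Y]
    (hX : CompactSpace X) (hY : T2Space Y) (f : X → Y) (hc : Continuous f)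
    (hs : Function.Surjective f) : tY = coinduced f tX :=
  ((@Continuous.isClosedMap _ _ _ _ hX hY f hc).isQuotientMap hc hs).eq_coinduced

private lemma weak_aux {G : Type*} [Group G] [TopologicalSpace G] [IsTopologicalGroup G]
    (K : ℕ → Set G) (hKcpt : ∀ k, IsCompact (K k))
    (hweak : ∀ C : Set G, IsClosed C ↔ ∀ k, IsClosed (C ∩ K k))
    (H : Subgroup G) [H.Normal] (hH : IsClosed (H : Set G))
    (M : ℕ → Set (G ⧸ H)) (hM : ∀ k, M k = (QuotientGroup.mk : G → G ⧸ H) '' K k) :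
    ∀ C : Set (G ⧸ H), IsClosed C ↔ ∀ k, IsClosed (Subtype.val ⁻¹' C : Set (M k)) := by
  haveI : IsClosed ((H : Set G)) := hH
  have hqc : Continuous (QuotientGroup.mk : G → G ⧸ H) := continuous_quot_mk
  intro C
  constructor
  · intro hC k
    exact hC.preimage continuous_subtype_val
  · intro h
    have hMcl : ∀ k, IsClosed (M k) := fun k =>
      (show IsCompact (M k) from (hM k) ▸ (hKcpt k).image hqc).isClosed
    have hpre : IsClosed ((QuotientGroup.mk : G → G ⧸ H) ⁻¹' C) := by
      rw [hweak]
      intro k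
      have h1 : IsClosed (C ∩ M k) := by
        have := ((hMcl k).isClosedEmbedding_subtypeVal.isClosedMap) _ (h k)
        rwa [Subtype.image_preimage_coe, Set.inter_comm] at this
      have h3 := (hweak _).mp (h1.preimage hqc) k
      have h4 : (QuotientGroup.mk : G → G ⧸ H) ⁻¹' (C ∩ M k) ∩ K k =
          (QuotientGroup.mk : G → G ⧸ H) ⁻¹' C ∩ K k := by
        ext x
        simp only [Set.mem_inter_iff, Set.mem_preimage, hM k]
        exact ⟨fun ⟨⟨h5, _⟩, h6⟩ => ⟨h5, h6⟩, fun ⟨h5, h6⟩ => ⟨⟨h5, ⟨x, h6, rfl⟩⟩, h6⟩⟩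
      rwa [h4] at h3
    exact (QuotientGroup.isQuotientMap_mk H).isClosed_preimage.mp hpre

/-- Let `G` be a topological group whose topology is the weak topology of an increasing
filtration by compact subsets `K k`, let `H` be a closed normal subgroup, `q : G → G/H`
the quotient map, and `M k = q '' K k` with the quotient topology from `q` restricted to
`K k`.  Then each inclusion `M k → M (k+1)` is a topological embedding, and the weak
topology on `G/H` determined by the `M k` coincides with the quotient topology. -/
theorem quotient_weak_topology_of_compact_filtration
    {G : Type*} [Group G] [TopologicalSpace G] [IsTopologicalGroup G]
    (K : ℕ → Set G) (hKcpt : ∀ k, IsCompact (K k)) (hmono : Monotone K)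
    (hcover : ⋃ k, K k = Set.univ)
    (hweak : ∀ C : Set G, IsClosed C ↔ ∀ k, IsClosed (C ∩ K k))
    (H : Subgroup G) [H.Normal] (hH : IsClosed (H : Set G))
    (q : G → G ⧸ H) (hq : q = QuotientGroup.mk)
    (M : ℕ → Set (G ⧸ H)) (hM : ∀ k, M k = q '' K k)
    -- `t k` is the quotient topology on `M k` induced by `q` restricted to `K k`:
    (t : ∀ k, TopologicalSpace (M k))
    (ht : ∀ k, t k = coinduced (fun x : K k => (⟨q x.1, (hM k) ▸ ⟨x.1, x.2, rfl⟩⟩ : M k))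
      inferInstance) :
    (∀ k, @Topology.IsEmbedding (M k) (M (k + 1)) (t k) (t (k + 1))
        (Set.inclusion (by rw [hM k, hM (k + 1)]; exact Set.image_mono (hmono (Nat.le_succ k))))) ∧
    (∀ C : Set (G ⧸ H), IsClosed C ↔ ∀ k, @IsClosed _ (t k) (Subtype.val ⁻¹' C)) := by
  haveI : IsClosed ((H : Set G)) := hH
  have hqc : Continuous q := by rw [hq]; exact continuous_quot_mk
  -- Each `t k` coincides with the subspace topology from `G ⧸ H`.
  have key : ∀ k, t k = (instTopologicalSpaceSubtype : TopologicalSpace (M k)) := by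
    intro k
    rw [ht k]
    have hcpt : CompactSpace (K k) := isCompact_iff_compactSpace.mp (hKcpt k)
    have hT2 : @T2Space (M k) instTopologicalSpaceSubtype :=
      @Topology.IsEmbedding.t2Space (M k) (G ⧸ H) instTopologicalSpaceSubtype _ _ _
        Topology.IsEmbedding.subtypeVal
    set f : K k → M k := fun x : K k =>
      (⟨q x.1, (hM k) ▸ ⟨x.1, x.2, rfl⟩⟩ : M k) with hf
    have hfc : @Continuous (K k) (M k) _ instTopologicalSpaceSubtype f :=
      Continuous.subtype_mk (hqc.comp continuous_subtype_val) _
    have hfs : Function.Surjective f := by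
      rintro ⟨m, hm⟩
      rw [hM k] at hm
      obtain ⟨x, hx, rfl⟩ := hm
      exact ⟨⟨x, hx⟩, rfl⟩
    exact (@coinduced_aux (K k) (M k) _ instTopologicalSpaceSubtype hcpt hT2 f hfc hfs).symm
  constructor
  · intro k
    rw [key k, key (k + 1)]
    exact Topology.IsEmbedding.inclusion _
  · subst hq
    obtain rfl : t = fun k => instTopologicalSpaceSubtype := funext key
    exact weak_aux K hKcpt hweak H hH M hM
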